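/- Let M = ((A, B), (C, D)) ∈ Sp(ℝ^{2D}, ω) (in D×D blocks) and let α, β ∈ ℝ. Then M Z_Ω M⁻¹ = ((0, αΣ), (βΣ, 0)) if and only if B Dᵀ + (4Ω²/θ²) A Cᵀ = 0, B Bᵀ + (4Ω²/θ²) A Aᵀ = α·1, and D Dᵀ + (4Ω²/θ²) C Cᵀ = β·1 (with 1 the D×D identity matrix). In particular, M leaves Z_Ω covariant in the sense of Langmann–Szabo exactly when these three conditions hold for some α, β ∈ ℝ. -/

import Mathlib

open Matrix

noncomputable section

/-- The standard symplectic matrix `Σ` on `ℝ^D`: block-diagonal with `D/2` blocks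
`((0, -1), (1, 0))`. -/
def stdSigma (D : ℕ) : Matrix (Fin D) (Fin D) ℝ := fun i j =>
  if i.val % 2 = 1 ∧ i.val = j.val + 1 then 1
  else if j.val % 2 = 1 ∧ j.val = i.val + 1 then -1 else 0

/-- The symplectic form `ω = ((0, Σ), (Σ, 0))` on the phase space `ℝ^{2D}`. -/
def omegaMat (D : ℕ) : Matrix (Fin D ⊕ Fin D) (Fin D ⊕ Fin D) ℝ :=
  Matrix.fromBlocks 0 (stdSigma D) (stdSigma D) 0

/-- `Z_Ω = ((0, (4Ω²/θ²)Σ), (Σ, 0))`. -/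
def ZOmega (D : ℕ) (θ Ω : ℝ) : Matrix (Fin D ⊕ Fin D) (Fin D ⊕ Fin D) ℝ :=
  Matrix.fromBlocks 0 ((4 * Ω ^ 2 / θ ^ 2) • stdSigma D) (stdSigma D) 0

lemma stdSigma_mul_self (D : ℕ) (hD : Even D) :
    stdSigma D * stdSigma D = -1 := by
  ext i k
  rw [Matrix.mul_apply]
  simp only [Matrix.neg_apply, Matrix.one_apply]
  rcases Nat.even_or_odd i.val with hi | hi
  · have hi1 : i.val + 1 < D := by
      rcases hD with ⟨m, hm⟩; rcases hi with ⟨a, ha⟩; omega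
    rw [Finset.sum_eq_single (⟨i.val + 1, hi1⟩ : Fin D)]
    · simp only [stdSigma, ne_eq, Fin.ext_iff, Fin.val_mk, and_true, true_and]
      rcases hi with ⟨a, ha⟩
      split_ifs <;> first | rfl | (exfalso; omega) | norm_num
    · intro j _ hj
      simp only [stdSigma, ne_eq, Fin.ext_iff, Fin.val_mk, and_true, true_and] at hj ⊢
      rcases hi with ⟨a, ha⟩
      split_ifs <;> first | rfl | (exfalso; omega) | norm_num
    · intro h; exact absurd (Finset.mem_univ _) h
  · have hlt : i.val - 1 < D := by omega
    rw [Finset.sum_eq_single (⟨i.val - 1, hlt⟩ : Fin D)]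
    · simp only [stdSigma, ne_eq, Fin.ext_iff, Fin.val_mk, and_true, true_and]
      rcases hi with ⟨a, ha⟩
      split_ifs <;> first | rfl | (exfalso; omega) | norm_num
    · intro j _ hj
      simp only [stdSigma, ne_eq, Fin.ext_iff, Fin.val_mk, and_true, true_and] at hj ⊢
      rcases hi with ⟨a, ha⟩
      split_ifs <;> first | rfl | (exfalso; omega) | norm_num
    · intro h; exact absurd (Finset.mem_univ _) h

lemma omegaMat_mul_self (D : ℕ) (hD : Even D) :
    omegaMat D * omegaMat D = -1 := by
  rw [omegaMat, Matrix.fromBlocks_multiply]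
  simp [stdSigma_mul_self D hD, ← Matrix.fromBlocks_one, Matrix.fromBlocks_neg]

/-- a symplectic block matrix `M = ((A, B), (C, D))` conjugates `Z_Ω` to
`((0, αΣ), (βΣ, 0))` iff `BDᵀ + (4Ω²/θ²)ACᵀ = 0`, `BBᵀ + (4Ω²/θ²)AAᵀ = α·1` and
`DDᵀ + (4Ω²/θ²)CCᵀ = β·1`. -/
theorem ZOmega_covariance_iff (D : ℕ) (hD : 0 < D) (hDeven : Even D)
    (θ : ℝ) (hθ : 0 < θ) (Ω : ℝ) (α β : ℝ)
    (A B C D' : Matrix (Fin D) (Fin D) ℝ)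
    (hM : (Matrix.fromBlocks A B C D')ᵀ * omegaMat D * Matrix.fromBlocks A B C D'
      = omegaMat D) :
    (Matrix.fromBlocks A B C D' * ZOmega D θ Ω * (Matrix.fromBlocks A B C D')⁻¹
        = Matrix.fromBlocks 0 (α • stdSigma D) (β • stdSigma D) 0) ↔
      (B * D'ᵀ + (4 * Ω ^ 2 / θ ^ 2) • (A * Cᵀ) = 0 ∧
       B * Bᵀ + (4 * Ω ^ 2 / θ ^ 2) • (A * Aᵀ) = α • (1 : Matrix (Fin D) (Fin D) ℝ) ∧
       D' * D'ᵀ + (4 * Ω ^ 2 / θ ^ 2) • (C * Cᵀ) = β • (1 : Matrix (Fin D) (Fin D) ℝ)) := by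
  set k : ℝ := 4 * Ω ^ 2 / θ ^ 2 with hk
  set S := stdSigma D with hS
  set M := Matrix.fromBlocks A B C D' with hMdef
  set ω := omegaMat D with hω
  set Z := ZOmega D θ Ω with hZ
  set W : Matrix (Fin D ⊕ Fin D) (Fin D ⊕ Fin D) ℝ :=
    Matrix.fromBlocks 0 (α • S) (β • S) 0 with hW
  have hωω : ω * ω = -1 := omegaMat_mul_self D hDeven
  have hleft : (-(ω * Mᵀ * ω)) * M = 1 := by
    have e : (-(ω * Mᵀ * ω)) * M = -(ω * (Mᵀ * ω * M)) := by noncomm_ring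
    rw [e, hM, hωω, neg_neg]
  rw [Matrix.inv_eq_left_inv hleft]
  have step1 : M * Z * (-(ω * Mᵀ * ω)) = W ↔ M * (Z * ω) * Mᵀ = W * ω := by
    constructor
    · intro h
      have h' : M * Z * (-(ω * Mᵀ * ω)) * ω = W * ω := by rw [h]
      have e1 : M * Z * (-(ω * Mᵀ * ω)) * ω = M * (Z * ω) * Mᵀ * (-(ω * ω)) := by
        noncomm_ring
      rw [e1, hωω, neg_neg, mul_one] at h'
      exact h'
    · intro h
      have e2 : M * Z * (-(ω * Mᵀ * ω)) = -(M * (Z * ω) * Mᵀ * ω) := by noncomm_ring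
      rw [e2, h, Matrix.mul_assoc, hωω, Matrix.mul_neg, Matrix.mul_one, neg_neg]
  rw [step1]
  have hZω : Z * ω = Matrix.fromBlocks (-(k • (1 : Matrix (Fin D) (Fin D) ℝ))) 0 0
      (-(1 : Matrix (Fin D) (Fin D) ℝ)) := by
    rw [hZ, hω, ZOmega, omegaMat, Matrix.fromBlocks_multiply]
    have hSS : S * S = -1 := stdSigma_mul_self D hDeven
    simp [Matrix.smul_mul, stdSigma_mul_self D hDeven, ← hS]
    simp [hSS, ← hk]
  have hWω : W * ω = Matrix.fromBlocks (-(α • (1 : Matrix (Fin D) (Fin D) ℝ))) 0 0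
      (-(β • (1 : Matrix (Fin D) (Fin D) ℝ))) := by
    rw [hW, hω, omegaMat, Matrix.fromBlocks_multiply]
    have hSS : S * S = -1 := stdSigma_mul_self D hDeven
    simp [Matrix.smul_mul, stdSigma_mul_self D hDeven, ← hS]
    simp [hSS]
  have hLHS : M * (Z * ω) * Mᵀ =
      Matrix.fromBlocks (-(k • (A * Aᵀ) + B * Bᵀ)) (-(k • (A * Cᵀ) + B * D'ᵀ))
        (-(k • (C * Aᵀ) + D' * Bᵀ)) (-(k • (C * Cᵀ) + D' * D'ᵀ)) := by
    rw [hZω, hMdef, Matrix.fromBlocks_transpose, Matrix.fromBlocks_multiply,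
      Matrix.fromBlocks_multiply, Matrix.fromBlocks_inj]
    refine ⟨?_, ?_, ?_, ?_⟩ <;>
      simp [Matrix.mul_smul, Matrix.smul_mul, Matrix.mul_neg, Matrix.neg_mul,
        Matrix.add_mul, Matrix.mul_add, add_comm]
  rw [hLHS, hWω, Matrix.fromBlocks_inj]
  constructor
  · rintro ⟨h11, h12, h21, h22⟩
    have e11 := neg_inj.mp h11
    have e12 := neg_eq_zero.mp h12
    have e22 := neg_inj.mp h22
    refine ⟨?_, ?_, ?_⟩
    · rw [← e12]; abel
    · rw [← e11]; abel
    · rw [← e22]; abel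
  · rintro ⟨h1, h2, h3⟩
    refine ⟨?_, ?_, ?_, ?_⟩
    · rw [neg_inj, ← h2]; abel
    · rw [neg_eq_zero, ← h1]; abel
    · rw [neg_eq_zero]
      have := congrArg Matrix.transpose h1
      simpa [Matrix.transpose_add, Matrix.transpose_smul, Matrix.transpose_mul,
        add_comm] using this
    · rw [neg_inj, ← h3]; abel
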